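/- Suppose a finite simple undirected graph G has k connected components and no bipartite components. Let Â = (D+I)^{-1/2}(A+I)(D+I)^{-1/2}, let X be any N×F nonnegative matrix, and let W_0, W_1, ... be entrywise nonnegative matrices with spectral norm at most 1. Define Y'_n = Â·ReLU(···Â·ReLU(Â X W_0) W_1···) W_n. Then limsup_{n→∞} rank(Y'_n) ≤ k. -/

import Mathlib

/-- `Y'_0 = Â X W_0`, `Y'_{n+1} = Â · ReLU(Y'_n) · W_{n+1}`, i.e.
`Y'_n = Â ReLU(⋯ Â ReLU(Â X W_0) W_1 ⋯) W_n`. -/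
def deepGCNOutput {N F : ℕ} (Ahat : Matrix (Fin N) (Fin N) ℝ)
    (X : Matrix (Fin N) (Fin F) ℝ) (W : ℕ → Matrix (Fin F) (Fin F) ℝ) :
    ℕ → Matrix (Fin N) (Fin F) ℝ
  | 0 => Ahat * X * W 0
  | n + 1 => Ahat * (deepGCNOutput Ahat X W n).map (fun z => max z 0) * W (n + 1)

open Matrix Filter Finset

/-- The product `W 0 * W 1 * ⋯ * W n`. -/
def Wprod {F : ℕ} (W : ℕ → Matrix (Fin F) (Fin F) ℝ) : ℕ → Matrix (Fin F) (Fin F) ℝ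
  | 0 => W 0
  | n + 1 => Wprod W n * W (n + 1)

lemma mul_entries_nonneg {a b c : ℕ} {A : Matrix (Fin a) (Fin b) ℝ} {B : Matrix (Fin b) (Fin c) ℝ}
    (hA : ∀ i j, 0 ≤ A i j) (hB : ∀ i j, 0 ≤ B i j) : ∀ i j, 0 ≤ (A * B) i j := by
  intro i j
  rw [Matrix.mul_apply]
  exact Finset.sum_nonneg fun t _ => mul_nonneg (hA _ _) (hB _ _)

lemma deep_closed {N F : ℕ} (Ahat : Matrix (Fin N) (Fin N) ℝ)
    (X : Matrix (Fin N) (Fin F) ℝ) (W : ℕ → Matrix (Fin F) (Fin F) ℝ)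
    (hA : ∀ i j, 0 ≤ Ahat i j) (hX : ∀ i j, 0 ≤ X i j) (hW : ∀ l i j, 0 ≤ W l i j) :
    ∀ n, (∀ i j, 0 ≤ deepGCNOutput Ahat X W n i j) ∧
      deepGCNOutput Ahat X W n = Ahat ^ (n + 1) * (X * Wprod W n) := by
  intro n
  induction n with
  | zero =>
    refine ⟨fun i j => mul_entries_nonneg (mul_entries_nonneg hA hX) (hW 0) i j, ?_⟩
    show Ahat * X * W 0 = Ahat ^ 1 * (X * W 0)
    rw [pow_one, Matrix.mul_assoc]
  | succ n ih =>
    have hrelu : (deepGCNOutput Ahat X W n).map (fun z => max z 0)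
        = deepGCNOutput Ahat X W n := by
      ext i j
      exact max_eq_left (ih.1 i j)
    constructor
    · intro i j
      show 0 ≤ (Ahat * (deepGCNOutput Ahat X W n).map (fun z => max z 0) * W (n + 1)) i j
      rw [hrelu]
      exact mul_entries_nonneg (mul_entries_nonneg hA ih.1) (hW (n + 1)) i j
    · show Ahat * (deepGCNOutput Ahat X W n).map (fun z => max z 0) * W (n + 1) = _
      rw [hrelu, ih.2]
      show Ahat * (Ahat ^ (n + 1) * (X * Wprod W n)) * W (n + 1)
          = Ahat ^ (n + 1 + 1) * (X * (Wprod W n * W (n + 1)))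
      simp only [← Matrix.mul_assoc, ← pow_succ']

lemma euclid_abs_apply_le_norm {m : ℕ} (x : EuclideanSpace ℝ (Fin m)) (a : Fin m) :
    |x a| ≤ ‖x‖ := by
  rw [EuclideanSpace.norm_eq]
  rw [← Real.sqrt_sq_eq_abs]
  apply Real.sqrt_le_sqrt
  have : |x a| ^ 2 = ‖x a‖ ^ 2 := by rw [Real.norm_eq_abs]
  rw [← sq_abs (x a), this]
  exact Finset.single_le_sum (fun i _ => sq_nonneg ‖x i‖) (Finset.mem_univ a)

lemma toEuclideanLin_mul {a b c : ℕ} (A : Matrix (Fin a) (Fin b) ℝ)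
    (B : Matrix (Fin b) (Fin c) ℝ) (u : EuclideanSpace ℝ (Fin c)) :
    Matrix.toEuclideanLin (A * B) u
      = Matrix.toEuclideanLin A (Matrix.toEuclideanLin B u) := by
  simp only [Matrix.toEuclideanLin_apply, Equiv.apply_symm_apply, ← Matrix.mulVec_mulVec]

theorem stmt13 {N F : ℕ} (G : SimpleGraph (Fin N)) [DecidableRel G.Adj] (k : ℕ)
    (hk : Nat.card G.ConnectedComponent = k)
    (hnobip : ∀ c : G.ConnectedComponent,
      ¬ (G.induce {v | G.connectedComponentMk v = c}).Colorable 2)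
    (X : Matrix (Fin N) (Fin F) ℝ) (hX : ∀ i j, 0 ≤ X i j)
    (W : ℕ → Matrix (Fin F) (Fin F) ℝ) (hWpos : ∀ l i j, 0 ≤ W l i j)
    (hWnorm : ∀ l (v : EuclideanSpace ℝ (Fin F)),
      ‖Matrix.toEuclideanLin (W l) v‖ ≤ ‖v‖) :
    let Dinvhalf : Matrix (Fin N) (Fin N) ℝ :=
      Matrix.diagonal fun i => (Real.sqrt ((G.degree i : ℝ) + 1))⁻¹
    let Ahat : Matrix (Fin N) (Fin N) ℝ :=
      Dinvhalf * (G.adjMatrix ℝ + 1) * Dinvhalf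
    ∀ ε : ℝ, 0 < ε → ∃ n₀ : ℕ, ∀ n, n₀ ≤ n →
      ∃ M : Matrix (Fin N) (Fin F) ℝ, M.rank ≤ k ∧
        ∀ i j, |deepGCNOutput Ahat X W n i j - M i j| < ε := by
  classical
  intro Dinvhalf Ahat
  -- basic positivity facts
  have hd1pos : ∀ i : Fin N, (0 : ℝ) < (G.degree i : ℝ) + 1 := by
    intro i; positivity
  have hsq : ∀ i : Fin N, (0 : ℝ) < Real.sqrt ((G.degree i : ℝ) + 1) :=
    fun i => Real.sqrt_pos.mpr (hd1pos i)
  set Dhalf : Matrix (Fin N) (Fin N) ℝ :=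
    Matrix.diagonal fun i => Real.sqrt ((G.degree i : ℝ) + 1) with hDhalf
  have hDinvhalf : Dinvhalf
      = Matrix.diagonal fun i => (Real.sqrt ((G.degree i : ℝ) + 1))⁻¹ := rfl
  have hAhat : Ahat = Dinvhalf * (G.adjMatrix ℝ + 1) * Dinvhalf := rfl
  have hDhD : Dhalf * Dinvhalf = 1 := by
    rw [hDhalf, hDinvhalf, Matrix.diagonal_mul_diagonal]
    rw [show (fun i => Real.sqrt ((G.degree i : ℝ) + 1)
        * (Real.sqrt ((G.degree i : ℝ) + 1))⁻¹) = fun _ : Fin N => (1 : ℝ) from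
      funext fun i => mul_inv_cancel₀ (ne_of_gt (hsq i))]
    exact Matrix.diagonal_one
  have hDhD' : Dinvhalf * Dhalf = 1 := by
    rw [hDhalf, hDinvhalf, Matrix.diagonal_mul_diagonal]
    rw [show (fun i => (Real.sqrt ((G.degree i : ℝ) + 1))⁻¹
        * Real.sqrt ((G.degree i : ℝ) + 1)) = fun _ : Fin N => (1 : ℝ) from
      funext fun i => inv_mul_cancel₀ (ne_of_gt (hsq i))]
    exact Matrix.diagonal_one
  have hcancel : ∀ x : Fin N → ℝ, Dhalf *ᵥ (Dinvhalf *ᵥ x) = x := by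
    intro x
    rw [Matrix.mulVec_mulVec, hDhD, Matrix.one_mulVec]
  -- entries of Ahat are nonnegative
  have hAnn : ∀ i j, 0 ≤ Ahat i j := by
    intro i j
    rw [hAhat]
    apply mul_entries_nonneg (B := Dinvhalf)
    · apply mul_entries_nonneg
      · intro i j
        rw [hDinvhalf, Matrix.diagonal_apply]
        split <;> positivity
      · intro i j
        simp only [Matrix.add_apply, SimpleGraph.adjMatrix_apply, Matrix.one_apply]
        split <;> split <;> norm_num
    · intro i j
      rw [hDinvhalf, Matrix.diagonal_apply]
      split <;> positivity
  -- Ahat is symmetric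
  have hsB : (G.adjMatrix ℝ + 1)ᵀ = G.adjMatrix ℝ + 1 := by
    rw [Matrix.transpose_add, Matrix.transpose_one, (G.isSymm_adjMatrix).eq]
  have hH : Ahat.IsHermitian := by
    show Ahatᴴ = Ahat
    rw [Matrix.conjTranspose_eq_transpose_of_trivial, hAhat, hDinvhalf, Matrix.transpose_mul,
      Matrix.transpose_mul, Matrix.diagonal_transpose, hsB, Matrix.mul_assoc]
  set U : Matrix (Fin N) (Fin N) ℝ := (hH.eigenvectorUnitary : Matrix (Fin N) (Fin N) ℝ)
    with hU
  set μ : Fin N → ℝ := hH.eigenvalues with hμ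
  have hU1 : U * star U = 1 := Matrix.mem_unitaryGroup_iff.mp hH.eigenvectorUnitary.2
  have hU1' : star U * U = 1 := Matrix.mem_unitaryGroup_iff'.mp hH.eigenvectorUnitary.2
  have hspec : Ahat = U * Matrix.diagonal μ * star U := by
    have := hH.spectral_theorem
    simpa using this
  have hpow : ∀ m : ℕ, Ahat ^ m = U * Matrix.diagonal (fun i => μ i ^ m) * star U := by
    intro m
    induction m with
    | zero =>
      simp [pow_zero, Matrix.diagonal_one, hU1]
    | succ m ih =>
      rw [pow_succ, ih, hspec]
      simp only [Matrix.mul_assoc]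
      rw [← Matrix.mul_assoc (star U) U (Matrix.diagonal μ * star U), hU1', Matrix.one_mul]
      rw [← Matrix.mul_assoc (Matrix.diagonal fun i => μ i ^ m) (Matrix.diagonal μ) (star U),
        Matrix.diagonal_mul_diagonal]
      rw [show (fun i => μ i ^ m * μ i) = fun i => μ i ^ (m + 1) from
        funext fun i => (pow_succ (μ i) m).symm]
  -- eigenvalue bounds via Gershgorin applied to the similar stochastic matrix P
  set At : Matrix (Fin N) (Fin N) ℝ := G.adjMatrix ℝ + 1 with hAt
  set P : Matrix (Fin N) (Fin N) ℝ :=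
    (Matrix.diagonal fun i => ((G.degree i : ℝ) + 1)⁻¹) * At with hP
  have hDD : Dinvhalf * Dinvhalf = Matrix.diagonal fun i => ((G.degree i : ℝ) + 1)⁻¹ := by
    have hf : (fun i : Fin N => (Real.sqrt ((G.degree i : ℝ) + 1))⁻¹
        * (Real.sqrt ((G.degree i : ℝ) + 1))⁻¹) = fun i => ((G.degree i : ℝ) + 1)⁻¹ :=
      funext fun i => by rw [← mul_inv, Real.mul_self_sqrt (le_of_lt (hd1pos i))]
    rw [hDinvhalf, Matrix.diagonal_mul_diagonal, hf]
  have hPD : P * Dinvhalf = Dinvhalf * Ahat := by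
    rw [hP, hAhat, ← hDD]
    simp only [Matrix.mul_assoc]
  have hPentry : ∀ a b, P a b
      = ((G.degree a : ℝ) + 1)⁻¹ * ((if G.Adj a b then (1:ℝ) else 0) + if a = b then 1 else 0) := by
    intro a b
    rw [hP, Matrix.diagonal_mul, hAt]
    simp [Matrix.one_apply]
  have hPnn : ∀ a b, 0 ≤ P a b := by
    intro a b
    rw [hPentry]
    have h1 : (0:ℝ) ≤ ((G.degree a : ℝ) + 1)⁻¹ := by positivity
    apply mul_nonneg h1
    apply add_nonneg <;> · split <;> norm_num
  have hPdiag : ∀ a, P a a = ((G.degree a : ℝ) + 1)⁻¹ := by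
    intro a
    rw [hPentry]
    simp [G.irrefl]
  have hProw : ∀ a, ∑ b, P a b = 1 := by
    intro a
    have : ∑ b, P a b = ((G.degree a : ℝ) + 1)⁻¹
        * ∑ b, ((if G.Adj a b then (1:ℝ) else 0) + if a = b then 1 else 0) := by
      rw [Finset.mul_sum]
      exact Finset.sum_congr rfl fun b _ => hPentry a b
    rw [this, Finset.sum_add_distrib, ← SimpleGraph.degree_eq_sum_if_adj]
    rw [Finset.sum_ite_eq _ a (fun _ => (1:ℝ))]
    simp only [Finset.mem_univ, if_true]
    exact inv_mul_cancel₀ (ne_of_gt (hd1pos a))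
  have hbound : ∀ i, -1 < μ i ∧ μ i ≤ 1 := by
    intro i
    -- build an eigenvector of P
    set v : Fin N → ℝ := ⇑(hH.eigenvectorBasis i) with hv
    have hvec : Ahat *ᵥ v = μ i • v := hH.mulVec_eigenvectorBasis i
    have hvne : v ≠ 0 := by
      intro h
      apply hH.eigenvectorBasis.orthonormal.ne_zero i
      ext a
      exact congrFun h a
    set w : Fin N → ℝ := Dinvhalf *ᵥ v with hw
    have hweig : P *ᵥ w = μ i • w := by
      rw [hw, Matrix.mulVec_mulVec, hPD, ← Matrix.mulVec_mulVec, hvec, Matrix.mulVec_smul]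
    have hwne : w ≠ 0 := by
      intro h
      apply hvne
      have := hcancel v
      rw [← hw] at this
      rw [h, Matrix.mulVec_zero] at this
      exact this.symm
    have hev : Module.End.HasEigenvalue (Matrix.toLin' P) (μ i) := by
      apply Module.End.hasEigenvalue_of_hasEigenvector (x := w)
      refine ⟨Module.End.mem_eigenspace_iff.mpr ?_, hwne⟩
      rw [Matrix.toLin'_apply, hweig]
    obtain ⟨kk, hball⟩ := eigenvalue_mem_ball hev
    rw [Metric.mem_closedBall, Real.dist_eq] at hball
    have herase : ∑ j ∈ Finset.univ.erase kk, ‖P kk j‖ = 1 - P kk kk := by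
      have h1 : ∀ j, ‖P kk j‖ = P kk j := fun j => by
        rw [Real.norm_eq_abs, abs_of_nonneg (hPnn kk j)]
      calc ∑ j ∈ Finset.univ.erase kk, ‖P kk j‖
          = ∑ j ∈ Finset.univ.erase kk, P kk j := Finset.sum_congr rfl fun j _ => h1 j
        _ = (∑ j, P kk j) - P kk kk := Finset.sum_erase_eq_sub (Finset.mem_univ kk)
        _ = 1 - P kk kk := by rw [hProw]
    rw [herase] at hball
    have hc0 : 0 < P kk kk := by rw [hPdiag]; positivity
    have h2 := abs_le.mp hball
    constructor
    · have : 2 * P kk kk - 1 ≤ μ i := by linarith [h2.1]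
      linarith
    · linarith [h2.2]
  -- multiplicity of eigenvalue 1 is at most k
  set Dt : Matrix (Fin N) (Fin N) ℝ := Matrix.diagonal fun i => (G.degree i : ℝ) + 1 with hDt
  have hLmat : G.lapMatrix ℝ = Dt - At := by
    have h1 : Dt = G.degMatrix ℝ + 1 := by
      rw [hDt]
      ext i j
      by_cases h : i = j <;>
        simp [Matrix.diagonal_apply, SimpleGraph.degMatrix, Matrix.one_apply, h]
    have h2 : G.lapMatrix ℝ = G.degMatrix ℝ - G.adjMatrix ℝ := rfl
    rw [h2, h1, hAt, add_sub_add_right_eq_sub]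
  have hDtD : Dt * Dinvhalf = Dhalf := by
    have hf2 : (fun i : Fin N => ((G.degree i : ℝ) + 1)
        * (Real.sqrt ((G.degree i : ℝ) + 1))⁻¹) = fun i => Real.sqrt ((G.degree i : ℝ) + 1) := by
      funext i
      rw [inv_eq_one_div, mul_one_div, eq_comm, eq_div_iff (ne_of_gt (hsq i))]
      exact Real.mul_self_sqrt (le_of_lt (hd1pos i))
    rw [hDt, hDinvhalf, hDhalf, Matrix.diagonal_mul_diagonal, hf2]
  have hker : ∀ i : Fin N, μ i = 1 →
      (Dinvhalf *ᵥ ⇑(hH.eigenvectorBasis i)) ∈ LinearMap.ker (Matrix.toLin' (G.lapMatrix ℝ)) := by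
    intro i hi
    set v : Fin N → ℝ := ⇑(hH.eigenvectorBasis i) with hv
    have hvec : Ahat *ᵥ v = v := by
      have := hH.mulVec_eigenvectorBasis i
      rw [← hμ, hi, one_smul] at this
      exact this
    set u : Fin N → ℝ := Dinvhalf *ᵥ v with hu
    have hAtu : At *ᵥ u = Dhalf *ᵥ v := by
      have h1 : Dinvhalf *ᵥ (At *ᵥ u) = v := by
        rw [hu, Matrix.mulVec_mulVec, Matrix.mulVec_mulVec, ← hAhat, hvec]
      have h3 := hcancel (At *ᵥ u)
      rw [h1] at h3
      exact h3.symm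
    have hDtu : Dt *ᵥ u = Dhalf *ᵥ v := by
      rw [hu, Matrix.mulVec_mulVec, hDtD]
    rw [LinearMap.mem_ker, Matrix.toLin'_apply, hLmat, Matrix.sub_mulVec, hAtu, hDtu, sub_self]
  have hcard : Fintype.card {i : Fin N // μ i = 1} ≤ k := by
    set T : EuclideanSpace ℝ (Fin N) →ₗ[ℝ] (Fin N → ℝ) :=
      (Matrix.mulVecLin Dinvhalf).comp (WithLp.linearEquiv 2 ℝ (Fin N → ℝ)).toLinearMap with hT
    have hTker : LinearMap.ker T = ⊥ := by
      rw [LinearMap.ker_eq_bot]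
      intro x y hxy
      have h1 : Dinvhalf *ᵥ (WithLp.linearEquiv 2 ℝ (Fin N → ℝ)) x
          = Dinvhalf *ᵥ (WithLp.linearEquiv 2 ℝ (Fin N → ℝ)) y := hxy
      have h2 := congrArg (fun z => Dhalf *ᵥ z) h1
      simp only [hcancel] at h2
      exact (WithLp.linearEquiv 2 ℝ (Fin N → ℝ)).injective h2
    set fam : {i : Fin N // μ i = 1} → (Fin N → ℝ) :=
      fun i => T (hH.eigenvectorBasis i.1) with hfam
    have hli : LinearIndependent ℝ fam := by
      have li0 : LinearIndependent ℝ (fun i => hH.eigenvectorBasis i) :=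
        hH.eigenvectorBasis.orthonormal.linearIndependent
      exact (li0.comp Subtype.val Subtype.val_injective).map' T hTker
    have hspan : Submodule.span ℝ (Set.range fam) ≤ LinearMap.ker (Matrix.toLin' (G.lapMatrix ℝ)) := by
      rw [Submodule.span_le]
      rintro _ ⟨i, rfl⟩
      exact hker i.1 i.2
    have hNc : Fintype.card G.ConnectedComponent
        = Module.finrank ℝ (LinearMap.ker (Matrix.toLin' (G.lapMatrix ℝ))) :=
      G.card_connectedComponent_eq_finrank_ker_toLin'_lapMatrix
    calc Fintype.card {i : Fin N // μ i = 1}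
        = Module.finrank ℝ (Submodule.span ℝ (Set.range fam)) := (finrank_span_eq_card hli).symm
      _ ≤ Module.finrank ℝ (LinearMap.ker (Matrix.toLin' (G.lapMatrix ℝ))) := Submodule.finrank_mono hspan
      _ = Fintype.card G.ConnectedComponent := hNc.symm
      _ = Nat.card G.ConnectedComponent := (Nat.card_eq_fintype_card).symm
      _ = k := hk
  -- the limiting projection
  set χ : Fin N → ℝ := fun i => if μ i = 1 then 1 else 0 with hχ
  set Pm : Matrix (Fin N) (Fin N) ℝ := U * Matrix.diagonal χ * star U with hPm
  have hrankPm : Pm.rank ≤ k := by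
    calc Pm.rank ≤ (U * Matrix.diagonal χ).rank := Matrix.rank_mul_le_left _ _
      _ ≤ (Matrix.diagonal χ).rank := Matrix.rank_mul_le_right _ _
      _ = Fintype.card {i // χ i ≠ 0} := Matrix.rank_diagonal χ
      _ = Fintype.card {i : Fin N // μ i = 1} := by
          apply Fintype.card_congr
          apply Equiv.subtypeEquivRight
          intro i
          by_cases h : μ i = 1 <;> simp [hχ, h]
      _ ≤ k := hcard
  -- spectral decomposition of the error
  have hE : ∀ m : ℕ, Ahat ^ m - Pm
      = U * Matrix.diagonal (fun i => μ i ^ m - χ i) * star U := by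
    intro m
    rw [hpow m, hPm]
    rw [show Matrix.diagonal (fun i => μ i ^ m - χ i)
        = Matrix.diagonal (fun i => μ i ^ m) - Matrix.diagonal χ from
      (Matrix.diagonal_sub _ _).symm]
    rw [Matrix.mul_sub, Matrix.sub_mul]
  set S : ℕ → ℝ := fun m => ∑ a : Fin N, ∑ b : Fin N, |(Ahat ^ m - Pm) a b| with hS
  have hSnn : ∀ m, 0 ≤ S m := by
    intro m
    apply Finset.sum_nonneg
    intro a _
    apply Finset.sum_nonneg
    intro b _
    exact abs_nonneg _
  have hEentry : ∀ m a b, (Ahat ^ m - Pm) a b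
      = ∑ i : Fin N, U a i * (μ i ^ m - χ i) * star U i b := by
    intro m a b
    rw [hE m]
    rw [Matrix.mul_apply]
    apply Finset.sum_congr rfl
    intro i _
    rw [Matrix.mul_diagonal]
  have hS0 : Tendsto S atTop (nhds 0) := by
    have hterm : ∀ a b : Fin N,
        Tendsto (fun m => (Ahat ^ m - Pm) a b) atTop (nhds 0) := by
      intro a b
      have : ∀ m, (Ahat ^ m - Pm) a b
          = ∑ i : Fin N, U a i * (μ i ^ m - χ i) * star U i b := fun m => hEentry m a b
      simp only [this]
      rw [show (0:ℝ) = ∑ _i : Fin N, 0 by simp]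
      apply tendsto_finset_sum
      intro i _
      have hcore : Tendsto (fun m => μ i ^ m - χ i) atTop (nhds 0) := by
        by_cases h : μ i = 1
        · simp only [hχ, h, if_true, one_pow, sub_self]
          exact tendsto_const_nhds
        · simp only [hχ, h, if_false, sub_zero]
          apply tendsto_pow_atTop_nhds_zero_of_abs_lt_one
          rcases hbound i with ⟨h1, h2⟩
          rw [abs_lt]
          exact ⟨h1, lt_of_le_of_ne h2 h⟩
      have := (hcore.const_mul (U a i)).mul_const (star U i b)
      simpa using this
    have habs : ∀ a b : Fin N,
        Tendsto (fun m => |(Ahat ^ m - Pm) a b|) atTop (nhds 0) := by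
      intro a b
      have := (hterm a b).abs
      simpa using this
    rw [hS]
    rw [show (0:ℝ) = ∑ _a : Fin N, ∑ _b : Fin N, 0 by simp]
    apply tendsto_finset_sum
    intro a _
    apply tendsto_finset_sum
    intro b _
    exact habs a b
  -- uniform bound on the entries of X * Wprod W n
  set B : ℝ := ‖LinearMap.toContinuousLinearMap (Matrix.toEuclideanLin X)‖ with hB
  have hBnn : 0 ≤ B := norm_nonneg _
  have hXB : ∀ u : EuclideanSpace ℝ (Fin F), ‖Matrix.toEuclideanLin X u‖ ≤ B * ‖u‖ := by
    intro u
    have := (LinearMap.toContinuousLinearMap (Matrix.toEuclideanLin X)).le_opNorm u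
    simpa using this
  have hWp : ∀ n (u : EuclideanSpace ℝ (Fin F)),
      ‖Matrix.toEuclideanLin (Wprod W n) u‖ ≤ ‖u‖ := by
    intro n
    induction n with
    | zero => exact hWnorm 0
    | succ n ih =>
      intro u
      show ‖Matrix.toEuclideanLin (Wprod W n * W (n + 1)) u‖ ≤ ‖u‖
      rw [toEuclideanLin_mul]
      exact le_trans (ih _) (hWnorm (n + 1) u)
  have hCB : ∀ n (a : Fin N) (j : Fin F), |(X * Wprod W n) a j| ≤ B := by
    intro n a j
    set u : EuclideanSpace ℝ (Fin F) := EuclideanSpace.single j (1:ℝ) with hu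
    have hcol : Matrix.toEuclideanLin (X * Wprod W n) u a = (X * Wprod W n) a j := by
      have : Matrix.toEuclideanLin (X * Wprod W n) u
          = (WithLp.equiv 2 (Fin N → ℝ)).symm ((X * Wprod W n) *ᵥ Pi.single j 1) := rfl
      rw [this]
      show ((X * Wprod W n) *ᵥ Pi.single j 1) a = _
      simp [Matrix.mulVec_single]
    calc |(X * Wprod W n) a j| = |Matrix.toEuclideanLin (X * Wprod W n) u a| := by rw [hcol]
      _ ≤ ‖Matrix.toEuclideanLin (X * Wprod W n) u‖ := euclid_abs_apply_le_norm _ a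
      _ = ‖Matrix.toEuclideanLin X (Matrix.toEuclideanLin (Wprod W n) u)‖ := by
          rw [toEuclideanLin_mul]
      _ ≤ B * ‖Matrix.toEuclideanLin (Wprod W n) u‖ := hXB _
      _ ≤ B * ‖u‖ := by
          apply mul_le_mul_of_nonneg_left (hWp n u) hBnn
      _ = B := by rw [hu, EuclideanSpace.norm_single, norm_one, mul_one]
  -- conclude
  intro ε hε
  set δ : ℝ := ε / (B + 1) with hδ
  have hδpos : 0 < δ := div_pos hε (by positivity)
  obtain ⟨n₀, hn₀⟩ := (Metric.tendsto_atTop.mp hS0) δ hδpos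
  refine ⟨n₀, fun n hn => ?_⟩
  refine ⟨Pm * (X * Wprod W n), le_trans (Matrix.rank_mul_le_left _ _) hrankPm, ?_⟩
  intro i j
  have hdc := (deep_closed Ahat X W hAnn hX hWpos n).2
  have hdiff : deepGCNOutput Ahat X W n i j - (Pm * (X * Wprod W n)) i j
      = ((Ahat ^ (n + 1) - Pm) * (X * Wprod W n)) i j := by
    rw [hdc, Matrix.sub_mul, Matrix.sub_apply]
  rw [hdiff]
  have hSn : S (n + 1) < δ := by
    have := hn₀ (n + 1) (le_trans hn (Nat.le_succ n))
    rw [Real.dist_eq, sub_zero, abs_of_nonneg (hSnn (n + 1))] at this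
    exact this
  have hrow : ∑ a, |(Ahat ^ (n + 1) - Pm) i a| ≤ S (n + 1) := by
    rw [hS]
    apply Finset.single_le_sum
      (f := fun r => ∑ b, |(Ahat ^ (n + 1) - Pm) r b|)
      (fun r _ => Finset.sum_nonneg fun b _ => abs_nonneg _) (Finset.mem_univ i)
  calc |((Ahat ^ (n + 1) - Pm) * (X * Wprod W n)) i j|
      = |∑ a, (Ahat ^ (n + 1) - Pm) i a * (X * Wprod W n) a j| := by rw [Matrix.mul_apply]
    _ ≤ ∑ a, |(Ahat ^ (n + 1) - Pm) i a * (X * Wprod W n) a j| :=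
        Finset.abs_sum_le_sum_abs _ _
    _ = ∑ a, |(Ahat ^ (n + 1) - Pm) i a| * |(X * Wprod W n) a j| := by
        apply Finset.sum_congr rfl
        intro a _
        rw [abs_mul]
    _ ≤ ∑ a, |(Ahat ^ (n + 1) - Pm) i a| * B := by
        apply Finset.sum_le_sum
        intro a _
        exact mul_le_mul_of_nonneg_left (hCB n a j) (abs_nonneg _)
    _ = (∑ a, |(Ahat ^ (n + 1) - Pm) i a|) * B := by rw [Finset.sum_mul]
    _ ≤ S (n + 1) * (B + 1) := by
        apply mul_le_mul hrow (by linarith) hBnn (hSnn (n + 1))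
    _ < δ * (B + 1) := by
        apply mul_lt_mul_of_pos_right hSn (by positivity)
    _ = ε := by
        rw [hδ, div_mul_cancel₀]
        positivity
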